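/- Let X be an E-valued random variable and Y a stationary quantizer of X, i.e. Y = E[X | Y]. If F : E → ℝ is differentiable with α-Hölder derivative DF (i.e. ‖DF(u) − DF(v)‖ ≤ [DF]_α |u − v|^α for all u, v), for some α ∈ (0,1], then |E[F(X)] − E[F(Y)]| ≤ [DF]_α · ‖X − Y‖₂^{1+α}. -/

import Mathlib

open MeasureTheory
open scoped ENNReal NNReal

/-- Taylor-type estimate for a function with `α`-Hölder Fréchet derivative. -/
lemma taylor_holder_bound {E : Type*} [NormedAddCommGroup E] [NormedSpace ℝ E]
    (F : E → ℝ) (hFdiff : Differentiable ℝ F) (α : NNReal) (hα0 : 0 < α)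
    (C : NNReal) (hHolder : HolderWith C α (fderiv ℝ F)) (x y : E) :
    |F x - F y - (fderiv ℝ F y) (x - y)| ≤ (C : ℝ) * ‖x - y‖ ^ (1 + (α : ℝ)) := by
  set s : Set E := Metric.closedBall y ‖x - y‖ with hs
  have hxs : x ∈ s := by
    simp [hs, Metric.mem_closedBall, dist_eq_norm]
  have hys : y ∈ s := Metric.mem_closedBall_self (norm_nonneg _)
  have bound : ∀ z ∈ s, ‖fderiv ℝ F z - fderiv ℝ F y‖ ≤ (C : ℝ) * ‖x - y‖ ^ (α : ℝ) := by
    intro z hz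
    have h1 : dist (fderiv ℝ F z) (fderiv ℝ F y) ≤ (C : ℝ) * dist z y ^ (α : ℝ) :=
      hHolder.dist_le z y
    rw [dist_eq_norm] at h1
    refine h1.trans (mul_le_mul_of_nonneg_left
      (Real.rpow_le_rpow dist_nonneg (Metric.mem_closedBall.mp hz) α.coe_nonneg)
      C.coe_nonneg)
  have key := (convex_closedBall y ‖x - y‖).norm_image_sub_le_of_norm_hasFDerivWithin_le'
    (f' := fun z => fderiv ℝ F z) (φ := fderiv ℝ F y)
    (fun z hz => (hFdiff z).hasFDerivAt.hasFDerivWithinAt) bound hys hxs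
  rw [Real.norm_eq_abs] at key
  refine key.trans (le_of_eq ?_)
  rw [Real.rpow_add' (norm_nonneg _) (by positivity), Real.rpow_one]
  ring

theorem stationary_quantizer_holder_derivative_error_bound
    {E : Type*} [NormedAddCommGroup E] [InnerProductSpace ℝ E]
    [SecondCountableTopology E] [CompleteSpace E] [MeasurableSpace E] [BorelSpace E]
    {Ω : Type*} [MeasureSpace Ω] [IsProbabilityMeasure (volume : Measure Ω)]
    (X Y : Ω → E) (hX : MemLp X 2 volume) (hY : MemLp Y 2 volume)
    (hYmeas : Measurable Y) (hYfin : (Set.range Y).Finite)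
    -- stationarity: `Y = E[X | σ(Y)]` almost surely
    (hstat : Y =ᵐ[volume]
      (volume : Measure Ω)[X | MeasurableSpace.comap Y inferInstance])
    (F : E → ℝ) (hFdiff : Differentiable ℝ F)
    (α : NNReal) (hα0 : 0 < α) (hα1 : (α : ℝ) ≤ 1)
    (C : NNReal) (hHolder : HolderWith C α (fderiv ℝ F))
    (hFX : Integrable (fun ω => F (X ω)) volume)
    (hFY : Integrable (fun ω => F (Y ω)) volume) :
    |(∫ ω, F (X ω)) - (∫ ω, F (Y ω))|
      ≤ (C : ℝ) *
        ((eLpNorm (fun ω => X ω - Y ω) 2 (volume : Measure Ω)).toReal) ^ (1 + (α : ℝ)) := by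
  set μ : Measure Ω := volume with hμ
  have hm : MeasurableSpace.comap Y inferInstance
      ≤ (MeasureSpace.toMeasurableSpace : MeasurableSpace Ω) := hYmeas.comap_le
  haveI : SigmaFinite (μ.trim hm) := by
    haveI : IsFiniteMeasure (μ.trim hm) := isFiniteMeasure_trim hm
    infer_instance
  set Z : Ω → E := fun ω => X ω - Y ω with hZdef
  have hZ : MemLp Z 2 μ := hX.sub hY
  have hXint : Integrable X μ := hX.integrable one_le_two
  have hYint : Integrable Y μ := hY.integrable one_le_two
  have hZint : Integrable Z μ := hXint.sub hYint
  set S : Finset E := hYfin.toFinset with hSdef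
  -- the linear term integrates to zero
  have hDeq : (fun ω => (fderiv ℝ F (Y ω)) (Z ω))
      = fun ω => ∑ y ∈ S, Set.indicator (Y ⁻¹' {y}) (fun ω => (fderiv ℝ F y) (Z ω)) ω := by
    funext ω
    rw [Finset.sum_eq_single_of_mem (Y ω) (by simp [hSdef, hYfin.mem_toFinset])]
    · rw [Set.indicator_of_mem (by simp)]
    · intro b _ hb
      refine Set.indicator_of_notMem ?_ _
      simp only [Set.mem_preimage, Set.mem_singleton_iff]
      exact fun h => hb h.symm
  have hterm_int : ∀ y : E, Integrable
      (fun ω => Set.indicator (Y ⁻¹' {y}) (fun ω => (fderiv ℝ F y) (Z ω)) ω) μ := by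
    intro y
    exact (((fderiv ℝ F y).integrable_comp hZint)).indicator
      (hYmeas (measurableSet_singleton y))
  have hDint : Integrable (fun ω => (fderiv ℝ F (Y ω)) (Z ω)) μ := by
    rw [hDeq]; exact integrable_finset_sum _ fun y _ => hterm_int y
  have hsetZ : ∀ y : E, ∫ ω in Y ⁻¹' {y}, Z ω ∂μ = 0 := by
    intro y
    have hAm : MeasurableSet[MeasurableSpace.comap Y inferInstance] (Y ⁻¹' {y}) :=
      ⟨{y}, measurableSet_singleton y, rfl⟩
    have h1 : ∫ ω in Y ⁻¹' {y}, X ω ∂μ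
        = ∫ ω in Y ⁻¹' {y}, (μ[X|MeasurableSpace.comap Y inferInstance]) ω ∂μ :=
      (setIntegral_condExp hm hXint hAm).symm
    have h2 : ∫ ω in Y ⁻¹' {y}, Y ω ∂μ
        = ∫ ω in Y ⁻¹' {y}, (μ[X|MeasurableSpace.comap Y inferInstance]) ω ∂μ :=
      integral_congr_ae (ae_restrict_of_ae hstat)
    rw [hZdef]
    rw [integral_sub hXint.integrableOn hYint.integrableOn, h1, h2, sub_self]
  have hDzero : ∫ ω, (fderiv ℝ F (Y ω)) (Z ω) ∂μ = 0 := by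
    rw [hDeq, integral_finset_sum _ fun y _ => hterm_int y]
    refine Finset.sum_eq_zero fun y _ => ?_
    rw [integral_indicator (hYmeas (measurableSet_singleton y))]
    rw [ContinuousLinearMap.integral_comp_comm _ hZint.integrableOn, hsetZ y, map_zero]
  -- rewrite the difference of integrals
  have hsplit : (∫ ω, F (X ω) ∂μ) - (∫ ω, F (Y ω) ∂μ)
      = ∫ ω, (F (X ω) - F (Y ω) - (fderiv ℝ F (Y ω)) (Z ω)) ∂μ := by
    have h1 : Integrable (fun ω => F (X ω) - F (Y ω)) μ := hFX.sub hFY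
    rw [integral_sub h1 hDint, integral_sub hFX hFY, hDzero, sub_zero]
  -- exponent bookkeeping
  set p : ℝ≥0∞ := (1 : ℝ≥0∞) + (α : ℝ≥0∞) with hpdef
  have hp0 : p ≠ 0 := (lt_of_lt_of_le zero_lt_one le_self_add).ne'
  have hptop : p ≠ ⊤ := by simp [hpdef]
  have hpr : p.toReal = 1 + (α : ℝ) := by
    rw [hpdef, ENNReal.toReal_add ENNReal.one_ne_top ENNReal.coe_ne_top,
      ENNReal.toReal_one, ENNReal.coe_toReal]
  have hprpos : (0 : ℝ) < p.toReal := by rw [hpr]; positivity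
  have hp2 : p ≤ 2 := by
    have hα : (α : ℝ≥0∞) ≤ 1 := by
      rw [← ENNReal.coe_one, ENNReal.coe_le_coe]
      exact_mod_cast hα1
    rw [hpdef, (by norm_num : (2 : ℝ≥0∞) = 1 + 1)]
    exact add_le_add le_rfl hα
  have hZp : MemLp Z p μ := hZ.mono_exponent hp2
  have hint_rpow : Integrable (fun ω => ‖Z ω‖ ^ p.toReal) μ :=
    hZp.integrable_norm_rpow hp0 hptop
  -- main estimate
  have hbound : |∫ ω, (F (X ω) - F (Y ω) - (fderiv ℝ F (Y ω)) (Z ω)) ∂μ|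
      ≤ ∫ ω, (C : ℝ) * ‖Z ω‖ ^ p.toReal ∂μ := by
    rw [← Real.norm_eq_abs]
    refine norm_integral_le_of_norm_le (hint_rpow.const_mul _) (ae_of_all _ fun ω => ?_)
    rw [Real.norm_eq_abs, hpr]
    exact taylor_holder_bound F hFdiff α hα0 C hHolder (X ω) (Y ω)
  have hint_eq : ∫ ω, ‖Z ω‖ ^ p.toReal ∂μ = ((eLpNorm Z p μ).toReal) ^ p.toReal := by
    have h := hZp.eLpNorm_eq_integral_rpow_norm hp0 hptop
    have hnn : 0 ≤ ∫ ω, ‖Z ω‖ ^ p.toReal ∂μ :=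
      integral_nonneg fun ω => Real.rpow_nonneg (norm_nonneg _) _
    rw [h, ENNReal.toReal_ofReal (Real.rpow_nonneg hnn _),
      Real.rpow_inv_rpow hnn hprpos.ne']
  have hmono : ((eLpNorm Z p μ).toReal) ^ p.toReal
      ≤ ((eLpNorm Z 2 μ).toReal) ^ p.toReal := by
    exact Real.rpow_le_rpow ENNReal.toReal_nonneg
      (ENNReal.toReal_mono hZ.2.ne
        (eLpNorm_le_eLpNorm_of_exponent_le hp2 hZ.aestronglyMeasurable)) hprpos.le
  calc |(∫ ω, F (X ω) ∂μ) - (∫ ω, F (Y ω) ∂μ)|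
      ≤ ∫ ω, (C : ℝ) * ‖Z ω‖ ^ p.toReal ∂μ := by rw [hsplit]; exact hbound
    _ = (C : ℝ) * ∫ ω, ‖Z ω‖ ^ p.toReal ∂μ := integral_const_mul _ _
    _ ≤ (C : ℝ) * ((eLpNorm Z 2 μ).toReal) ^ p.toReal := by
        rw [hint_eq]; exact mul_le_mul_of_nonneg_left hmono C.coe_nonneg
    _ = (C : ℝ) * ((eLpNorm (fun ω => X ω - Y ω) 2 μ).toReal) ^ (1 + (α : ℝ)) := by
        rw [hpr]
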